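/- arXiv:1411.4877 — 3 statements merged into one kernel-verified Lean document; each statement's English description precedes it below -/
import Mathlib

section
/- Let H_p denote the p-th probabilists' Hermite polynomial. Then for all p, q ∈ ℕ and x ∈ ℝ, H_p(x) · H_q(x) = ∑_{i=0}^{min(p,q)} (p! q!)/(i! (p-i)! (q-i)!) · H_{p+q-2i}(x). (This is the one-dimensional instance of Shigekawa's multiplication formula for multiple Wiener integrals, since I_p(h^{⊗p}) = |h|^p H_p(δh/|h|).) -/
open Polynomial
open scoped BigOperators

lemma key_nat (p q k : ℕ) (hk1 : k + 1 ≤ p) (hk2 : k + 1 ≤ q) :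
    (k+1).factorial * ((p+1).choose (k+1)) * (q.choose (k+1))
      + p * (k.factorial * ((p-1).choose k) * (q.choose k))
    = (k+1).factorial * (p.choose (k+1)) * (q.choose (k+1))
      + (p + q - 2*k) * (k.factorial * (p.choose k) * (q.choose k)) := by
  have h1 : q.choose (k+1) * (k+1) = q.choose k * (q - k) := Nat.choose_succ_right_eq q k
  have h2 : p.choose (k+1) * (k+1) = p.choose k * (p - k) := Nat.choose_succ_right_eq p k
  have h3 : p * (p-1).choose k = p.choose (k+1) * (k+1) := by
    obtain ⟨m, rfl⟩ := Nat.exists_eq_add_of_le hk1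
    rw [show k + 1 + m - 1 = k + m from by omega, show k + 1 + m = k + m + 1 from by omega]
    exact Nat.add_one_mul_choose_eq (k + m) k
  have pas : (p+1).choose (k+1) = p.choose k + p.choose (k+1) := Nat.choose_succ_succ p k
  rw [pas, Nat.factorial_succ, show p + q - 2*k = (p - k) + (q - k) from by omega]
  zify
  zify at h1 h2 h3
  linear_combination (k.factorial : ℤ) * (p.choose k) * h1 + (k.factorial : ℤ) * (q.choose k) * h3
    + (k.factorial : ℤ) * (q.choose k) * h2

lemma coeff_step (m q i : ℕ) (hi : i + 1 ≤ q) :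
    (((i+1).factorial * ((m+1).choose (i+1)) * (q.choose (i+1)) : ℕ) : ℝ)
      = (((i+1).factorial * (m.choose (i+1)) * (q.choose (i+1)) : ℕ) : ℝ)
        + ((m + q - 2*i : ℕ) : ℝ) * ((i.factorial * (m.choose i) * (q.choose i) : ℕ) : ℝ)
        - (m : ℝ) * ((i.factorial * ((m-1).choose i) * (q.choose i) : ℕ) : ℝ) := by
  rcases lt_trichotomy i m with him | him | him
  · have key := key_nat m q i him hi
    have := congrArg (fun n : ℕ => (n : ℝ)) key
    push_cast at this ⊢
    linarith [this]
  · subst him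
    have h0 : (i-1).choose i * i = 0 := by
      rcases Nat.eq_zero_or_pos i with rfl | hm
      · simp
      · rw [Nat.choose_eq_zero_of_lt (by omega)]; ring
    have h1 : q.choose (i+1) * (i+1) = q.choose i * (q - i) := Nat.choose_succ_right_eq q i
    have key : (i+1).factorial * ((i+1).choose (i+1)) * (q.choose (i+1))
        + i * (i.factorial * ((i-1).choose i) * (q.choose i))
        = (i+1).factorial * (i.choose (i+1)) * (q.choose (i+1))
        + (i + q - 2*i) * (i.factorial * (i.choose i) * (q.choose i)) := by
      rw [Nat.choose_self, Nat.choose_succ_self, Nat.choose_self,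
        show i + q - 2*i = q - i from by omega, Nat.factorial_succ]
      zify
      zify at h0 h1
      linear_combination (i.factorial : ℤ) * h1 + (i.factorial : ℤ) * (q.choose i) * h0
    have := congrArg (fun n : ℕ => (n : ℝ)) key
    push_cast at this ⊢
    linarith [this]
  · rw [Nat.choose_eq_zero_of_lt (show m + 1 < i + 1 by omega),
      Nat.choose_eq_zero_of_lt (show m < i + 1 by omega),
      Nat.choose_eq_zero_of_lt him, Nat.choose_eq_zero_of_lt (show m - 1 < i by omega)]
    simp

lemma boundary (m q : ℕ) :
    ((m + q - 2*q : ℕ) : ℝ) * ((q.factorial * (m.choose q) * (q.choose q) : ℕ) : ℝ)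
      = (m : ℝ) * ((q.factorial * ((m-1).choose q) * (q.choose q) : ℕ) : ℝ) := by
  rcases le_or_gt q m with hqm | hqm
  · have h2 : m.choose (q+1) * (q+1) = m.choose q * (m - q) := Nat.choose_succ_right_eq m q
    have h3 : m * (m-1).choose q = m.choose (q+1) * (q+1) := by
      rcases Nat.eq_zero_or_pos m with rfl | hm
      · interval_cases q
        simp
      · obtain ⟨s, rfl⟩ := Nat.exists_eq_add_of_le hm
        rw [show 1 + s - 1 = s from by omega, show 1 + s = s + 1 from by omega]
        exact Nat.add_one_mul_choose_eq s q
    have key : (m + q - 2*q) * (q.factorial * (m.choose q) * (q.choose q))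
        = m * (q.factorial * ((m-1).choose q) * (q.choose q)) := by
      rw [show m + q - 2*q = m - q from by omega]
      zify
      zify at h2 h3
      linear_combination (-(q.factorial : ℤ) * (q.choose q)) * h3 + (-(q.factorial : ℤ) * (q.choose q)) * h2
    have := congrArg (fun n : ℕ => (n : ℝ)) key
    push_cast at this ⊢
    linarith [this]
  · rw [Nat.choose_eq_zero_of_lt hqm, Nat.choose_eq_zero_of_lt (show m - 1 < q by omega)]
    simp

lemma derivative_hermite' (n : ℕ) :
    derivative (hermite n) = n * hermite (n - 1) := by
  induction n with
  | zero => simp [hermite_zero]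
  | succ n ih =>
    rw [hermite_succ, derivative_sub, derivative_mul, derivative_X, one_mul, ih]
    cases n with
    | zero => simp [hermite_zero]
    | succ m =>
      simp only [Nat.succ_sub_one]
      have h : X * hermite m - derivative (hermite m) = hermite (m + 1) := (hermite_succ m).symm
      have hd : derivative ((↑(m+1) : ℤ[X]) * hermite m) = ↑(m+1) * derivative (hermite m) := by
        rw [derivative_mul, derivative_natCast, zero_mul, zero_add]
      push_cast at *
      rw [hd]
      linear_combination (↑(m) + 1 : ℤ[X]) * h

lemma hermite_rec (x : ℝ) (n : ℕ) :
    x * aeval x (hermite n) = aeval x (hermite (n + 1)) + n * aeval x (hermite (n - 1)) := by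
  have h := hermite_succ n
  rw [derivative_hermite'] at h
  have := congrArg (fun P => (aeval x P : ℝ)) h
  simp only [map_sub, map_mul, aeval_X, map_natCast] at this
  rw [this]; ring
lemma hermite_mul_aux (q : ℕ) (x : ℝ) : ∀ p : ℕ,
    (aeval x (hermite p) : ℝ) * aeval x (hermite q)
      = ∑ i ∈ Finset.range (q+1),
          ((i.factorial * (p.choose i) * (q.choose i) : ℕ) : ℝ) * aeval x (hermite (p + q - 2*i)) := by
  set h : ℕ → ℝ := fun n => aeval x (hermite n) with hh
  intro p
  induction p using Nat.strong_induction_on with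
  | _ p IH =>
    match p with
    | 0 =>
      rw [Finset.sum_eq_single_of_mem 0 (Finset.mem_range.mpr (by omega))]
      · simp [hh, hermite_zero]
      · intro i _ hi
        rw [Nat.choose_eq_zero_of_lt (show 0 < i by omega)]
        simp
    | (m+1) =>
      have IH0 := IH m (by omega)
      have IH1 := IH (m-1) (by omega)
      have hrec : h (m+1) = x * h m - m * h (m-1) := by
        have := hermite_rec x m; simp only [hh] at *; linarith [this]
      have lhs_eq : h (m+1) * h q
          = ∑ i ∈ Finset.range (q+1),
              (x * (((i.factorial * (m.choose i) * (q.choose i) : ℕ) : ℝ) * h (m + q - 2*i))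
              - (m : ℝ) * (((i.factorial * ((m-1).choose i) * (q.choose i) : ℕ) : ℝ) * h (m-1 + q - 2*i))) := by
        rw [hrec, sub_mul, mul_assoc, mul_assoc, IH0, IH1, Finset.mul_sum, Finset.mul_sum,
          ← Finset.sum_sub_distrib]
      rw [lhs_eq]
      -- termwise transformation
      have step1 : ∀ i ∈ Finset.range (q+1),
          x * (((i.factorial * (m.choose i) * (q.choose i) : ℕ) : ℝ) * h (m + q - 2*i))
            - (m : ℝ) * (((i.factorial * ((m-1).choose i) * (q.choose i) : ℕ) : ℝ) * h (m-1 + q - 2*i))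
          = ((i.factorial * (m.choose i) * (q.choose i) : ℕ) : ℝ) * h (m+1 + q - 2*i)
            + (((m + q - 2*i : ℕ) : ℝ) * ((i.factorial * (m.choose i) * (q.choose i) : ℕ) : ℝ)
               - (m : ℝ) * ((i.factorial * ((m-1).choose i) * (q.choose i) : ℕ) : ℝ))
              * h (m+1 + q - 2*(i+1)) := by
        intro i hi
        have hiq : i ≤ q := by simpa using Nat.lt_succ_iff.mp (Finset.mem_range.mp hi)
        by_cases him : i ≤ m
        · have hrec2 := hermite_rec x (m + q - 2*i)
          rcases Nat.eq_zero_or_pos m with rfl | hm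
          · have hi0 : i = 0 := by omega
            subst hi0
            rw [show (0:ℕ)+1+q-2*(0+1) = q-1 from by omega,
                show (0:ℕ)+1+q-2*0 = q+1 from by omega,
                show (0:ℕ)+q-2*0 = q from by omega]
            rw [show (0:ℕ)+q-2*0+1 = q+1 from by omega,
                show (0:ℕ)+q-2*0-1 = q-1 from by omega,
                show (0:ℕ)+q-2*0 = q from by omega] at hrec2
            simp only [hh, Nat.factorial_zero, Nat.choose_zero_right, Nat.choose_self,
              Nat.one_mul, Nat.mul_one, Nat.cast_one, Nat.cast_zero, zero_mul, sub_zero,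
              mul_one, one_mul]
            linear_combination hrec2
          · have e1 : m + q - 2*i + 1 = m+1 + q - 2*i := by omega
            have e2 : m + q - 2*i - 1 = m+1 + q - 2*(i+1) := by omega
            have e3 : m-1 + q - 2*i = m+1 + q - 2*(i+1) := by omega
            rw [e1, e2] at hrec2
            rw [e3]
            simp only [hh] at hrec2 ⊢
            nlinarith [hrec2]
        · rw [Nat.choose_eq_zero_of_lt (show m < i by omega),
            Nat.choose_eq_zero_of_lt (show m-1 < i by omega)]
          simp
      rw [Finset.sum_congr rfl step1, Finset.sum_add_distrib]
      -- kill the top term of the second sum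
      rw [Finset.sum_range_succ
        (f := fun i => (((m + q - 2*i : ℕ) : ℝ) * ((i.factorial * (m.choose i) * (q.choose i) : ℕ) : ℝ)
               - (m : ℝ) * ((i.factorial * ((m-1).choose i) * (q.choose i) : ℕ) : ℝ))
              * h (m+1 + q - 2*(i+1)))]
      rw [boundary m q, sub_self, zero_mul, add_zero]
      -- reindex: split off i = 0 from target and first sum
      rw [Finset.sum_range_succ' (f := fun i =>
        ((i.factorial * ((m+1).choose i) * (q.choose i) : ℕ) : ℝ) * h (m+1 + q - 2*i))]
      rw [Finset.sum_range_succ' (f := fun i =>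
        ((i.factorial * (m.choose i) * (q.choose i) : ℕ) : ℝ) * h (m+1 + q - 2*i))]
      simp only [Nat.factorial_zero, Nat.choose_zero_right, Nat.mul_zero, Nat.sub_zero, one_mul,
        mul_one, Nat.cast_one]
      rw [add_right_comm, ← Finset.sum_add_distrib]
      congr 1
      refine Finset.sum_congr rfl fun i hi => ?_
      have hiq : i + 1 ≤ q := Finset.mem_range.mp hi
      rw [coeff_step m q i hiq]
      ring


/-- Shigekawa's multiplication formula in dimension one: the product formula for
probabilists' Hermite polynomials. -/
theorem hermite_mul_formula (p q : ℕ) (x : ℝ) :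
    (aeval x (hermite p) : ℝ) * aeval x (hermite q)
      = ∑ i ∈ Finset.range (min p q + 1),
          ((p.factorial : ℝ) * q.factorial /
              (i.factorial * (p - i).factorial * (q - i).factorial)) *
            aeval x (hermite (p + q - 2 * i)) := by
  rw [hermite_mul_aux q x p]
  have hsub : Finset.range (min p q + 1) ⊆ Finset.range (q + 1) :=
    Finset.range_subset_range.mpr (by omega)
  rw [← Finset.sum_subset hsub (fun i hi hni => by
    rw [Nat.choose_eq_zero_of_lt (show p < i by
      simp only [Finset.mem_range] at hi hni; omega)]
    simp)]
  refine Finset.sum_congr rfl fun i hi => ?_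
  have hip : i ≤ p := by simp only [Finset.mem_range] at hi; omega
  have hiq : i ≤ q := by simp only [Finset.mem_range] at hi; omega
  congr 1
  rw [Nat.cast_mul, Nat.cast_mul, Nat.cast_choose ℝ hip, Nat.cast_choose ℝ hiq]
  have h1 : (i.factorial : ℝ) ≠ 0 := Nat.cast_ne_zero.mpr (Nat.factorial_ne_zero i)
  have h2 : ((p - i).factorial : ℝ) ≠ 0 := Nat.cast_ne_zero.mpr (Nat.factorial_ne_zero _)
  have h3 : ((q - i).factorial : ℝ) ≠ 0 := Nat.cast_ne_zero.mpr (Nat.factorial_ne_zero _)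
  field_simp
end

section
/- Stroock's formula in dimension one: for a polynomial φ and standard Gaussian measure γ, φ admits the Hermite (chaos) expansion φ(x) = ∑_{n=0}^{deg φ} (c_n/n!) H_n(x), where c_n = ∫ φ^{(n)} dγ, i.e. the n-th chaos coefficient is the Gaussian expectation of the n-th derivative. -/
open Polynomial MeasureTheory ProbabilityTheory
open scoped BigOperators

open Real Filter Asymptotics Set

namespace StroockAux

/-- Real Hermite polynomial. -/
noncomputable def Hr (n : ℕ) : Polynomial ℝ := (hermite n).map (Int.castRingHom ℝ)

lemma aeval_eq_eval_Hr (n : ℕ) (x : ℝ) : (aeval x (hermite n) : ℝ) = (Hr n).eval x := by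
  rw [Hr, eval_map, aeval_def, algebraMap_int_eq]

lemma Hr_zero : Hr 0 = 1 := by simp [Hr, hermite_zero]

lemma Hr_succ (n : ℕ) : Hr (n + 1) = X * Hr n - derivative (Hr n) := by
  simp [Hr, hermite_succ, Polynomial.map_mul, Polynomial.map_sub, derivative_map]

lemma Hr_monic (n : ℕ) : (Hr n).Monic :=
  (hermite_monic n).map _

lemma Hr_natDegree (n : ℕ) : (Hr n).natDegree = n := by
  rw [Hr, (hermite_monic n).natDegree_map, natDegree_hermite]

lemma derivative_hermite_int (n : ℕ) :
    derivative (hermite (n + 1)) = C ((n : ℤ) + 1) * hermite n := by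
  induction n with
  | zero => simp [hermite_one, hermite_zero]
  | succ n ih =>
      rw [hermite_succ (n + 1), derivative_sub, derivative_mul, derivative_X, one_mul, ih,
        derivative_mul, derivative_C, zero_mul, zero_add]
      have hC : (C (((n : ℕ) + 1 : ℕ) + 1 : ℤ)) = C ((n : ℤ) + 1) + 1 := by
        push_cast
        rw [C_add, C_1]
      push_cast at hC ⊢
      rw [hC, hermite_succ n]
      ring

lemma derivative_Hr (n : ℕ) :
    derivative (Hr (n + 1)) = C ((n : ℝ) + 1) * Hr n := by
  have h := congrArg (Polynomial.map (Int.castRingHom ℝ)) (derivative_hermite_int n)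
  rw [← derivative_map] at h
  rw [Hr, h, Polynomial.map_mul, map_C]
  norm_num [Hr]

lemma iterate_derivative_Hr {k m : ℕ} (h : k ≤ m) :
    derivative^[k] (Hr m) = C (m.descFactorial k : ℝ) * Hr (m - k) := by
  induction k with
  | zero => simp
  | succ k ih =>
      have hk : k ≤ m := Nat.le_of_succ_le h
      rw [Function.iterate_succ_apply', ih hk, derivative_mul, derivative_C, zero_mul, zero_add]
      have hmk : m - k = (m - (k + 1)) + 1 := by omega
      rw [hmk, derivative_Hr, ← mul_assoc, ← C_mul, Nat.descFactorial_succ]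
      congr 2
      have : ((m - (k + 1) : ℕ) : ℝ) + 1 = ((m - k : ℕ) : ℝ) := by
        push_cast [hmk]
        ring
      rw [this]
      push_cast
      ring

/-- The Gaussian-weighted function attached to a polynomial. -/
noncomputable def G (p : Polynomial ℝ) : ℝ → ℝ := fun x => p.eval x * Real.exp (-(x ^ 2 / 2))

lemma G_comp_neg (p : Polynomial ℝ) (x : ℝ) : G p (-x) = G (p.comp (-X)) x := by
  simp [G, eval_comp]

lemma G_isLittleO (p : Polynomial ℝ) :
    G p =o[atTop] fun x => Real.exp (-(1 / 2) * x) := by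
  have h1 : (fun x : ℝ => p.eval x) =O[atTop] fun x => x ^ p.natDegree := by
    have h := Polynomial.isBigO_of_degree_le p (X ^ p.natDegree : Polynomial ℝ)
      (by simp only [degree_X_pow]; exact Polynomial.degree_le_natDegree)
    simpa using h
  have h2 : (fun x : ℝ => x ^ p.natDegree * Real.exp (-(x ^ 2 / 2))) =o[atTop]
      fun x => Real.exp (-(1 / 2) * x) := by
    have := rpow_mul_exp_neg_mul_sq_isLittleO_exp_neg one_half_pos (p.natDegree : ℝ)
    refine this.congr' ?_ (EventuallyEq.refl _ _)
    filter_upwards with x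
    rw [Real.rpow_natCast, show -(1 / 2 : ℝ) * x ^ 2 = -(x ^ 2 / 2) by ring]
  exact (h1.mul (isBigO_refl (fun x => Real.exp (-(x ^ 2 / 2))) atTop)).trans_isLittleO h2

lemma G_tendsto_atTop (p : Polynomial ℝ) : Tendsto (G p) atTop (nhds 0) :=
  (G_isLittleO p).tendsto_zero_of_tendsto
    (tendsto_exp_atBot.comp (tendsto_id.const_mul_atTop_of_neg (by norm_num)))

lemma G_tendsto_atBot (p : Polynomial ℝ) : Tendsto (G p) atBot (nhds 0) := by
  have h := (G_tendsto_atTop (p.comp (-X))).comp tendsto_neg_atBot_atTop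
  refine h.congr fun x => ?_
  simp [Function.comp, ← G_comp_neg]

lemma G_continuous (p : Polynomial ℝ) : Continuous (G p) := by
  exact (p.continuous_aeval).mul (Real.continuous_exp.comp (by fun_prop))

lemma G_integrableOn_Ioi (p : Polynomial ℝ) (a : ℝ) : IntegrableOn (G p) (Ioi a) := by
  refine integrable_of_isBigO_exp_neg (one_half_pos) ((G_continuous p).continuousOn) ?_
  have := (G_isLittleO p).isBigO
  simpa [neg_mul] using this

lemma G_integrable (p : Polynomial ℝ) : Integrable (G p) := by
  have hIic : IntegrableOn (G p) (Iic 0) := by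
    rw [← Measure.map_neg_eq_self (volume : Measure ℝ)]
    have m : MeasurableEmbedding fun x : ℝ => -x := (Homeomorph.neg ℝ).measurableEmbedding
    rw [m.integrableOn_map_iff]
    have : (G p) ∘ (fun x : ℝ => -x) = G (p.comp (-X)) := by
      ext x; simp [Function.comp, G_comp_neg]
    rw [this]
    have : (fun x : ℝ => -x) ⁻¹' (Iic 0) = Ici 0 := by
      ext x; simp
    rw [this]
    exact Iff.mpr integrableOn_Ici_iff_integrableOn_Ioi (G_integrableOn_Ioi _ 0)
  have h := hIic.union (G_integrableOn_Ioi p 0)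
  rwa [Iic_union_Ioi, integrableOn_univ] at h

lemma G_hasDerivAt (m : ℕ) (x : ℝ) :
    HasDerivAt (G (Hr m)) (-(G (Hr (m + 1)) x)) x := by
  have h1 : HasDerivAt (fun y : ℝ => (Hr m).eval y) ((derivative (Hr m)).eval x) x :=
    Polynomial.hasDerivAt _ x
  have h2 : HasDerivAt (fun y : ℝ => Real.exp (-(y ^ 2 / 2))) (-x * Real.exp (-(x ^ 2 / 2))) x := by
    have hx : HasDerivAt (fun y : ℝ => -(y ^ 2 / 2)) (-x) x := by
      have := ((hasDerivAt_pow 2 x).div_const 2).fun_neg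
      simpa using this
    simpa [mul_comm] using hx.exp
  have h := h1.mul h2
  refine HasDerivAt.congr_deriv (f := G (Hr m)) h ?_
  rw [Hr_succ]
  simp only [G, eval_sub, eval_mul, eval_X]
  ring

lemma integral_G_Hr_succ (m : ℕ) : ∫ x : ℝ, G (Hr (m + 1)) x = 0 := by
  have h := integral_of_hasDerivAt_of_tendsto (f := G (Hr m))
    (f' := fun x => -(G (Hr (m + 1)) x)) (fun x => G_hasDerivAt m x)
    ((G_integrable (Hr (m + 1))).neg) (G_tendsto_atBot _) (G_tendsto_atTop _)
  rw [integral_neg] at h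
  simpa using h.symm

lemma gaussianPDFReal_zero_one (x : ℝ) :
    gaussianPDFReal 0 1 x = (Real.sqrt (2 * π))⁻¹ * Real.exp (-(x ^ 2 / 2)) := by
  have h1 : ((1 : NNReal) : ℝ) = 1 := rfl
  rw [gaussianPDFReal, h1, mul_one, show -(x - 0) ^ 2 / (2 * (1 : ℝ)) = -(x ^ 2 / 2) by ring]

lemma integral_gaussianReal_eq (f : ℝ → ℝ) :
    ∫ y, f y ∂(gaussianReal 0 1) = ∫ x, gaussianPDFReal 0 1 x * f x := by
  rw [gaussianReal_of_var_ne_zero _ one_ne_zero]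
  have hgg : (gaussianPDF 0 1) = fun x => ((gaussianPDFReal 0 1 x).toNNReal : ENNReal) := rfl
  rw [hgg]
  rw [integral_withDensity_eq_integral_smul
    ((measurable_gaussianPDFReal 0 1).real_toNNReal) f]
  congr 1
  ext x
  rw [NNReal.smul_def, smul_eq_mul, Real.coe_toNNReal _ (gaussianPDFReal_nonneg 0 1 x)]

lemma integrable_eval_gaussianReal (p : Polynomial ℝ) :
    Integrable (fun y => p.eval y) (gaussianReal 0 1) := by
  rw [gaussianReal_of_var_ne_zero _ one_ne_zero]
  rw [integrable_withDensity_iff (measurable_gaussianPDF 0 1)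
    (Filter.Eventually.of_forall fun x => ENNReal.ofReal_lt_top)]
  have : (fun x => p.eval x * (gaussianPDF 0 1 x).toReal)
      = fun x => (Real.sqrt (2 * π))⁻¹ * G p x := by
    ext x
    rw [gaussianPDF, ENNReal.toReal_ofReal (gaussianPDFReal_nonneg 0 1 x),
      gaussianPDFReal_zero_one]
    simp [G]
    ring
  rw [this]
  exact (G_integrable p).const_mul _

lemma integral_eval_Hr (n : ℕ) :
    ∫ y, (Hr n).eval y ∂(gaussianReal 0 1) = if n = 0 then 1 else 0 := by
  cases n with
  | zero =>
      simp [Hr_zero]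
  | succ m =>
      rw [integral_gaussianReal_eq]
      have : (fun x => gaussianPDFReal 0 1 x * (Hr (m + 1)).eval x)
          = fun x => (Real.sqrt (2 * π))⁻¹ * G (Hr (m + 1)) x := by
        ext x
        rw [gaussianPDFReal_zero_one]
        simp [G]
        ring
      rw [this, integral_const_mul, integral_G_Hr_succ]
      simp

lemma integral_iterate_derivative_Hr (n m : ℕ) :
    ∫ y, (derivative^[n] (Hr m)).eval y ∂(gaussianReal 0 1)
      = if n = m then (m.factorial : ℝ) else 0 := by
  rcases le_or_gt n m with h | h
  · rw [iterate_derivative_Hr h]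
    simp only [eval_mul, eval_C]
    rw [integral_const_mul, integral_eval_Hr]
    rcases eq_or_lt_of_le h with rfl | h'
    · simp [Nat.descFactorial_self]
    · have h1 : m - n ≠ 0 := by omega
      have h2 : n ≠ m := by omega
      simp [h1, h2]
  · have hz : derivative^[n] (Hr m) = 0 :=
      iterate_derivative_eq_zero (by rw [Hr_natDegree]; exact h)
    have h2 : n ≠ m := by omega
    simp [hz, h2]

lemma Hr_expansion (x : ℝ) {m N : ℕ} (hm : m < N) :
    (Hr m).eval x
      = ∑ n ∈ Finset.range N,
          (∫ y : ℝ, (derivative^[n] (Hr m)).eval y ∂(gaussianReal 0 1)) / n.factorial *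
            (Hr n).eval x := by
  have : ∀ n ∈ Finset.range N,
      (∫ y : ℝ, (derivative^[n] (Hr m)).eval y ∂(gaussianReal 0 1)) / n.factorial *
        (Hr n).eval x = if n = m then (Hr m).eval x else 0 := by
    intro n _
    rw [integral_iterate_derivative_Hr]
    split_ifs with h
    · subst h
      rw [div_self (by exact_mod_cast Nat.factorial_ne_zero n), one_mul]
    · simp
  rw [Finset.sum_congr rfl this, Finset.sum_ite_eq' (Finset.range N) m
    (fun _ => (Hr m).eval x)]
  simp [Finset.mem_range.mpr hm]

lemma main_aux (x : ℝ) : ∀ d : ℕ, ∀ φ : Polynomial ℝ, φ.natDegree ≤ d →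
    ∀ N : ℕ, φ.natDegree < N →
    φ.eval x
      = ∑ n ∈ Finset.range N,
          (∫ y : ℝ, (derivative^[n] φ).eval y ∂(gaussianReal 0 1)) / n.factorial *
            (Hr n).eval x := by
  intro d
  induction d using Nat.strong_induction_on with
  | _ d ih =>
    intro φ hφd N hN
    by_cases h0 : φ = 0
    · subst h0
      simp
    · set m := φ.natDegree with hm
      set c := φ.leadingCoeff with hc
      set ψ := φ - C c * Hr m with hψdef
      have hc0 : c ≠ 0 := leadingCoeff_ne_zero.mpr h0
      have hHrdeg : (Hr m).degree = (m : ℕ) := by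
        rw [degree_eq_natDegree (Hr_monic m).ne_zero, Hr_natDegree]
      have hdegCH : (C c * Hr m).degree = φ.degree := by
        rw [degree_C_mul hc0, hHrdeg, degree_eq_natDegree h0]
      have hlc : (C c * Hr m).leadingCoeff = c := by
        rw [leadingCoeff_mul, leadingCoeff_C, (Hr_monic m).leadingCoeff, mul_one]
      have hsplit : φ = ψ + C c * Hr m := by rw [hψdef]; ring
      have hψeval : ψ.eval x = ∑ n ∈ Finset.range N,
          (∫ y : ℝ, (derivative^[n] ψ).eval y ∂(gaussianReal 0 1)) / n.factorial *
            (Hr n).eval x := by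
        by_cases hψ0 : ψ = 0
        · rw [hψ0]; simp
        · have hψdeg : ψ.degree < φ.degree := degree_sub_lt hdegCH.symm h0 hlc.symm
          have hψnat : ψ.natDegree < m := natDegree_lt_natDegree hψ0 hψdeg
          exact ih ψ.natDegree (lt_of_lt_of_le hψnat hφd) ψ le_rfl N (hψnat.trans hN)
      have hint : ∀ n, (∫ y : ℝ, (derivative^[n] φ).eval y ∂(gaussianReal 0 1))
          = (∫ y : ℝ, (derivative^[n] ψ).eval y ∂(gaussianReal 0 1))
            + c * ∫ y : ℝ, (derivative^[n] (Hr m)).eval y ∂(gaussianReal 0 1) := by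
        intro n
        conv_lhs => rw [hsplit]
        simp only [iterate_map_add, iterate_derivative_C_mul]
        have : (fun y => ((derivative^[n] ψ) + C c * (derivative^[n] (Hr m))).eval y)
            = fun y => (derivative^[n] ψ).eval y + c * (derivative^[n] (Hr m)).eval y := by
          ext y; simp
        rw [show (∫ y : ℝ, ((derivative^[n] ψ) + C c * (derivative^[n] (Hr m))).eval y
              ∂(gaussianReal 0 1))
            = ∫ y : ℝ, ((derivative^[n] ψ).eval y + c * (derivative^[n] (Hr m)).eval y)
              ∂(gaussianReal 0 1) by rw [← this]]
        rw [integral_add (integrable_eval_gaussianReal _)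
          ((integrable_eval_gaussianReal _).const_mul c), integral_const_mul]
      have hterm : ∀ n ∈ Finset.range N,
          (∫ y : ℝ, (derivative^[n] φ).eval y ∂(gaussianReal 0 1)) / n.factorial *
            (Hr n).eval x
          = (∫ y : ℝ, (derivative^[n] ψ).eval y ∂(gaussianReal 0 1)) / n.factorial *
              (Hr n).eval x
            + c * ((∫ y : ℝ, (derivative^[n] (Hr m)).eval y ∂(gaussianReal 0 1)) / n.factorial *
              (Hr n).eval x) := by
        intro n _
        rw [hint n]
        ring
      rw [Finset.sum_congr rfl hterm, Finset.sum_add_distrib, ← Finset.mul_sum, ← hψeval,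
        ← Hr_expansion x hN]
      conv_lhs => rw [hsplit]
      simp

end StroockAux

/-- Stroock's formula in dimension one: a polynomial `φ` has the Hermite expansion
`φ(x) = ∑ₙ (cₙ/n!) Hₙ(x)` with `cₙ = ∫ φ⁽ⁿ⁾ dγ`. -/
theorem stroock_hermite_expansion (φ : Polynomial ℝ) (x : ℝ) :
    φ.eval x
      = ∑ n ∈ Finset.range (φ.natDegree + 1),
          (∫ y : ℝ, (derivative^[n] φ).eval y ∂(gaussianReal 0 1)) / n.factorial *
            (aeval x (hermite n) : ℝ) := by
  simp only [StroockAux.aeval_eq_eval_Hr]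
  exact StroockAux.main_aux x φ.natDegree φ le_rfl _ (Nat.lt_succ_self _)
end

section
/- Stroock's coefficient bound in dimension one: for a polynomial φ, |∫ φ^{(n)} dγ| ≤ √(n!) · ‖φ‖_{L²(γ)} for every n ∈ ℕ. -/
open Polynomial MeasureTheory ProbabilityTheory
open Real Filter Asymptotics Topology
open scoped ENNReal NNReal


noncomputable def E (x : ℝ) : ℝ := Real.exp (-(x ^ 2 / 2))

lemma tendsto_pow_E_atTop (n : ℕ) :
    Tendsto (fun y : ℝ => y ^ n * E y) atTop (𝓝 0) := by
  have h := tendsto_pow_mul_exp_neg_atTop_nhds_zero n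
  apply squeeze_zero' (g := fun y => Real.exp (1/2) * (y ^ n * Real.exp (-y)))
  · filter_upwards [eventually_ge_atTop (0:ℝ)] with y hy
    exact mul_nonneg (pow_nonneg hy n) (Real.exp_pos _).le
  · filter_upwards [eventually_ge_atTop (0:ℝ)] with y hy
    have : E y ≤ Real.exp (1/2) * Real.exp (-y) := by
      rw [← Real.exp_add, E]
      apply Real.exp_le_exp.2
      nlinarith [sq_nonneg (y - 1)]
    calc y ^ n * E y ≤ y ^ n * (Real.exp (1/2) * Real.exp (-y)) := by
          apply mul_le_mul_of_nonneg_left this (by positivity)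
      _ = Real.exp (1/2) * (y ^ n * Real.exp (-y)) := by ring
  · simpa using h.const_mul (Real.exp (1/2))

lemma E_nonneg (x : ℝ) : 0 ≤ E x := (Real.exp_pos _).le

lemma continuous_E : Continuous E := by
  unfold E; fun_prop

lemma pow_E4_bounded (n : ℕ) (x : ℝ) :
    |x| ^ n * Real.exp (-(1/4) * x ^ 2) ≤ (n.factorial : ℝ) * 4 ^ n + 1 := by
  rcases le_or_gt (|x|) 1 with h | h
  · have h1 : |x| ^ n ≤ 1 := pow_le_one₀ (abs_nonneg x) h
    have h2 : Real.exp (-(1/4) * x ^ 2) ≤ 1 := by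
      rw [Real.exp_le_one_iff]; nlinarith [sq_nonneg x]
    nlinarith [(Nat.one_le_cast (α := ℝ)).2 n.factorial_pos, pow_pos (by norm_num : (0:ℝ) < 4) n,
      mul_le_one₀ h1 (Real.exp_pos _).le h2]
  · have hx1 : (1:ℝ) ≤ |x| ^ n := one_le_pow₀ h.le
    have hx0 : (0:ℝ) < |x| ^ n := lt_of_lt_of_le one_pos hx1
    have hx2 : (0:ℝ) ≤ x ^ 2 / 4 := by positivity
    have hle := Real.pow_div_factorial_le_exp _ hx2 n
    have e : ((x ^ 2 / 4) ^ n : ℝ) = |x| ^ n * |x| ^ n / 4 ^ n := by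
      rw [div_pow, ← sq_abs, ← pow_mul, two_mul, pow_add]
    have hinv : Real.exp (-(1/4) * x ^ 2)
        ≤ (n.factorial : ℝ) * 4 ^ n / (|x| ^ n * |x| ^ n) := by
      have heq : -(1/4) * x ^ 2 = -(x ^ 2 / 4) := by ring
      have hf : (0:ℝ) < (n.factorial : ℝ) := Nat.cast_pos.2 n.factorial_pos
      rw [heq, Real.exp_neg, inv_le_comm₀ (Real.exp_pos _) (by positivity), inv_div]
      rw [e] at hle
      refine le_trans (le_of_eq ?_) hle
      field_simp
    calc |x| ^ n * Real.exp (-(1/4) * x ^ 2)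
        ≤ |x| ^ n * ((n.factorial : ℝ) * 4 ^ n / (|x| ^ n * |x| ^ n)) :=
          mul_le_mul_of_nonneg_left hinv (by positivity)
      _ = (n.factorial : ℝ) * 4 ^ n / |x| ^ n := by field_simp
      _ ≤ (n.factorial : ℝ) * 4 ^ n := by
          rw [div_le_iff₀ hx0]
          exact le_mul_of_one_le_right (by positivity) hx1
      _ ≤ (n.factorial : ℝ) * 4 ^ n + 1 := by linarith

lemma integrable_pow_E (n : ℕ) : Integrable (fun x : ℝ => x ^ n * E x) := by
  have h : Integrable (fun x : ℝ => ((n.factorial : ℝ) * 4 ^ n + 1) * Real.exp (-(1/4) * x ^ 2)) :=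
    (integrable_exp_neg_mul_sq (by norm_num : (0:ℝ) < 1/4)).const_mul _
  apply h.mono'
  · exact ((continuous_pow n).mul continuous_E).aestronglyMeasurable
  · filter_upwards with x
    have hE : E x = Real.exp (-(1/4) * x ^ 2) * Real.exp (-(1/4) * x ^ 2) := by
      rw [← Real.exp_add, E]; ring_nf
    rw [Real.norm_eq_abs, abs_mul, abs_pow, abs_of_nonneg (E_nonneg x), hE, ← mul_assoc]
    exact mul_le_mul_of_nonneg_right (pow_E4_bounded n x) (Real.exp_pos _).le

lemma integrable_poly_E (p : ℝ[X]) : Integrable (fun x : ℝ => p.eval x * E x) := by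
  have : (fun x : ℝ => p.eval x * E x)
      = fun x => ∑ i ∈ Finset.range (p.natDegree + 1), p.coeff i * (x ^ i * E x) := by
    funext x
    rw [Polynomial.eval_eq_sum_range, Finset.sum_mul]
    simp [mul_assoc]
  rw [this]
  exact integrable_finset_sum _ fun i _ => (integrable_pow_E i).const_mul _

lemma tendsto_poly_E_atTop (p : ℝ[X]) :
    Tendsto (fun x : ℝ => p.eval x * E x) atTop (𝓝 0) := by
  have : (fun x : ℝ => p.eval x * E x)
      = fun x => ∑ i ∈ Finset.range (p.natDegree + 1), p.coeff i * (x ^ i * E x) := by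
    funext x
    rw [Polynomial.eval_eq_sum_range, Finset.sum_mul]
    simp [mul_assoc]
  rw [this]
  have := tendsto_finset_sum (Finset.range (p.natDegree + 1))
    (fun i _ => (tendsto_pow_E_atTop i).const_mul (p.coeff i))
  simpa using this

lemma tendsto_poly_E_atBot (p : ℝ[X]) :
    Tendsto (fun x : ℝ => p.eval x * E x) atBot (𝓝 0) := by
  have h1 : Tendsto (fun x : ℝ => (p.comp (-X : ℝ[X])).eval x * E x) atTop (𝓝 0) :=
    tendsto_poly_E_atTop _
  have h3 := h1.comp tendsto_neg_atBot_atTop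
  exact h3.congr fun x => by
    simp [Function.comp, E, Polynomial.eval_comp, neg_neg, neg_sq]

lemma hasDerivAt_poly_E (p : ℝ[X]) (x : ℝ) :
    HasDerivAt (fun y : ℝ => p.eval y * E y)
      (((derivative p : ℝ[X]) - X * p).eval x * E x) x := by
  have h1 : HasDerivAt (fun y : ℝ => p.eval y) ((derivative p).eval x) x :=
    p.hasDerivAt x
  have h2 : HasDerivAt (fun y : ℝ => E y) (-x * E x) x := by
    have hinner : HasDerivAt (fun y : ℝ => -(y ^ 2 / 2)) (-x) x := by
      have := ((hasDerivAt_pow 2 x).div_const 2).neg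
      have h' : HasDerivAt (-fun y : ℝ => y ^ 2 / 2) (-x) x := by simpa using this
      exact h'
    have := hinner.exp
    simpa [E, mul_comm] using this
  have : HasDerivAt (fun y : ℝ => p.eval y * E y)
      ((derivative p).eval x * E x + p.eval x * (-x * E x)) x := h1.mul h2
  convert this using 1
  simp only [Polynomial.eval_sub, Polynomial.eval_mul, Polynomial.eval_X]
  ring

lemma ibp_E (p : ℝ[X]) :
    ∫ x : ℝ, ((derivative p : ℝ[X]).eval x) * E x
      = ∫ x : ℝ, ((X * p : ℝ[X]).eval x) * E x := by
  have hint : Integrable (fun x : ℝ => ((derivative p : ℝ[X]) - X * p).eval x * E x) :=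
    integrable_poly_E _
  have hzero : ∫ x : ℝ, ((derivative p : ℝ[X]) - X * p).eval x * E x = 0 := by
    have := MeasureTheory.integral_of_hasDerivAt_of_tendsto
      (f := fun y : ℝ => p.eval y * E y)
      (f' := fun x => ((derivative p : ℝ[X]) - X * p).eval x * E x)
      (fun x => hasDerivAt_poly_E p x) hint
      (tendsto_poly_E_atBot p) (tendsto_poly_E_atTop p)
    rw [this]; ring
  have h1 : Integrable (fun x : ℝ => (derivative p : ℝ[X]).eval x * E x) :=
    integrable_poly_E _
  have h2 : Integrable (fun x : ℝ => (X * p : ℝ[X]).eval x * E x) :=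
    integrable_poly_E _
  have h3 : ∫ x : ℝ, ((derivative p : ℝ[X]).eval x * E x - (X * p : ℝ[X]).eval x * E x) = 0 := by
    rw [← hzero]
    congr 1
    funext x
    simp only [Polynomial.eval_sub]
    ring
  rwa [integral_sub h1 h2, sub_eq_zero] at h3

noncomputable def H (n : ℕ) : ℝ[X] := Polynomial.map (Int.castRingHom ℝ) (hermite n)

lemma H_zero : H 0 = 1 := by simp [H, hermite_zero]

lemma H_succ (n : ℕ) : H (n + 1) = X * H n - derivative (H n) := by
  unfold H
  rw [hermite_succ, Polynomial.map_sub, Polynomial.map_mul, Polynomial.map_X,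
    Polynomial.derivative_map]

lemma key_E (n : ℕ) (p : ℝ[X]) :
    ∫ x : ℝ, (derivative^[n] p).eval x * E x
      = ∫ x : ℝ, (p * H n).eval x * E x := by
  induction n generalizing p with
  | zero => simp [H_zero]
  | succ n ih =>
    rw [Function.iterate_succ_apply, ih (derivative p)]
    have hprod := ibp_E (p * H n)
    rw [derivative_mul] at hprod
    have hsplit : ∫ x : ℝ, (derivative p * H n + p * derivative (H n) : ℝ[X]).eval x * E x
        = (∫ x : ℝ, (derivative p * H n : ℝ[X]).eval x * E x)
          + ∫ x : ℝ, (p * derivative (H n) : ℝ[X]).eval x * E x := by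
      rw [← integral_add (integrable_poly_E _) (integrable_poly_E _)]
      congr 1
      funext x
      simp only [Polynomial.eval_add]
      ring
    have hrhs : ∫ x : ℝ, (p * H (n + 1) : ℝ[X]).eval x * E x
        = ∫ x : ℝ, ((X * (p * H n) : ℝ[X]).eval x * E x
            - (p * derivative (H n) : ℝ[X]).eval x * E x) := by
      congr 1
      funext x
      rw [H_succ]
      simp only [Polynomial.eval_sub, Polynomial.eval_mul, Polynomial.eval_X]
      ring
    rw [hrhs, integral_sub (integrable_poly_E _) (integrable_poly_E _)]
    linarith [hprod, hsplit]

lemma natDegree_H (n : ℕ) : (H n).natDegree = n := by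
  rw [H, (hermite_monic n).natDegree_map, natDegree_hermite]

lemma iterate_derivative_H (n : ℕ) :
    derivative^[n] (H n) = C (n.factorial : ℝ) := by
  have hdeg : (derivative^[n] (H n)).natDegree ≤ 0 := by
    refine le_trans (natDegree_iterate_derivative _ _) ?_
    rw [natDegree_H]
    omega
  rw [Polynomial.eq_C_of_natDegree_le_zero hdeg]
  congr 1
  rw [Polynomial.coeff_iterate_derivative]
  simp only [Nat.zero_add, Nat.descFactorial_self]
  rw [H, Polynomial.coeff_map, coeff_hermite_self]
  simp

noncomputable def gc : ℝ := (Real.sqrt (2 * Real.pi))⁻¹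

lemma pdf_eq (x : ℝ) : gaussianPDFReal 0 1 x = gc * E x := by
  rw [gaussianPDFReal, gc, E]
  norm_num
  exact Or.inl (by ring)

lemma gauss_withDensity :
    gaussianReal 0 1
      = MeasureTheory.volume.withDensity
          (fun x => ((Real.toNNReal (gaussianPDFReal 0 1 x) : ℝ≥0) : ℝ≥0∞)) := by
  rw [gaussianReal_of_var_ne_zero _ one_ne_zero]
  rfl

lemma integral_gauss (f : ℝ → ℝ) :
    ∫ x, f x ∂(gaussianReal 0 1) = gc * ∫ x, f x * E x := by
  rw [gauss_withDensity,
    integral_withDensity_eq_integral_smul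
      ((measurable_gaussianPDFReal 0 1).real_toNNReal) f]
  rw [← integral_const_mul]
  congr 1
  funext x
  rw [NNReal.smul_def, Real.coe_toNNReal _ (gaussianPDFReal_nonneg 0 1 x), pdf_eq,
    smul_eq_mul]
  ring

lemma integrable_poly_gauss (p : ℝ[X]) :
    Integrable (fun x => p.eval x) (gaussianReal 0 1) := by
  rw [gauss_withDensity, integrable_withDensity_iff
    ((measurable_gaussianPDFReal 0 1).real_toNNReal.coe_nnreal_ennreal)
    (Filter.Eventually.of_forall fun x => ENNReal.coe_lt_top)]
  refine ((integrable_poly_E p).const_mul gc).congr ?_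
  filter_upwards with x
  rw [ENNReal.coe_toReal, Real.coe_toNNReal _ (gaussianPDFReal_nonneg 0 1 x), pdf_eq]
  ring

lemma cs {μ : Measure ℝ} {f g : ℝ → ℝ}
    (hf2 : Integrable (fun x => f x ^ 2) μ) (hg2 : Integrable (fun x => g x ^ 2) μ)
    (hfg : Integrable (fun x => f x * g x) μ) :
    |∫ x, f x * g x ∂μ|
      ≤ Real.sqrt (∫ x, f x ^ 2 ∂μ) * Real.sqrt (∫ x, g x ^ 2 ∂μ) := by
  set A := ∫ x, f x ^ 2 ∂μ with hA_def
  set B := ∫ x, g x ^ 2 ∂μ with hB_def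
  set C := ∫ x, f x * g x ∂μ with hC_def
  have hA : 0 ≤ A := integral_nonneg fun x => sq_nonneg _
  have key : ∀ t : ℝ, 0 ≤ A * (t * t) + (2 * C) * t + B := by
    intro t
    have heq : (fun x => (t * f x + g x) ^ 2)
        = fun x => t ^ 2 * f x ^ 2 + 2 * t * (f x * g x) + g x ^ 2 :=
      funext fun x => by ring
    have h1 : Integrable (fun x => (t * f x + g x) ^ 2) μ := by
      rw [heq]
      exact ((hf2.const_mul _).add (hfg.const_mul _)).add hg2
    have h2 : 0 ≤ ∫ x, (t * f x + g x) ^ 2 ∂μ := integral_nonneg fun x => sq_nonneg _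
    have i12 : Integrable (fun x => t ^ 2 * f x ^ 2 + 2 * t * (f x * g x)) μ :=
      (hf2.const_mul (t ^ 2)).add (hfg.const_mul (2 * t))
    have h3 : ∫ x, (t * f x + g x) ^ 2 ∂μ = A * (t * t) + (2 * C) * t + B := by
      rw [heq, integral_add i12 hg2,
        integral_add (hf2.const_mul (t ^ 2)) (hfg.const_mul (2 * t)),
        integral_const_mul, integral_const_mul]
      rw [hA_def, hB_def, hC_def]
      ring
    linarith [h3 ▸ h2]
  have hd := discrim_le_zero key
  rw [discrim] at hd
  have hC2 : C ^ 2 ≤ A * B := by nlinarith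
  calc |C| = Real.sqrt (C ^ 2) := (Real.sqrt_sq_eq_abs C).symm
    _ ≤ Real.sqrt (A * B) := Real.sqrt_le_sqrt hC2
    _ = Real.sqrt A * Real.sqrt B := Real.sqrt_mul hA B

lemma integral_gauss_poly_eq (n : ℕ) (p : ℝ[X]) :
    ∫ x, (derivative^[n] p).eval x ∂(gaussianReal 0 1)
      = ∫ x, (p * H n).eval x ∂(gaussianReal 0 1) := by
  rw [integral_gauss, integral_gauss, key_E]

lemma integral_H_sq (n : ℕ) :
    ∫ x, ((H n).eval x) ^ 2 ∂(gaussianReal 0 1) = (n.factorial : ℝ) := by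
  have h1 : ∫ x, ((H n).eval x) ^ 2 ∂(gaussianReal 0 1)
      = ∫ x, (H n * H n).eval x ∂(gaussianReal 0 1) := by
    congr 1
    funext x
    rw [Polynomial.eval_mul]
    ring
  rw [h1, ← integral_gauss_poly_eq n (H n), iterate_derivative_H]
  simp


/-- Stroock's coefficient bound in dimension one:
`|∫ φ⁽ⁿ⁾ dγ| ≤ √(n!) ‖φ‖_{L²(γ)}`. -/
theorem stroock_coefficient_bound (φ : Polynomial ℝ) (n : ℕ) :
    |∫ x : ℝ, (derivative^[n] φ).eval x ∂(gaussianReal 0 1)|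
      ≤ Real.sqrt (n.factorial : ℝ) *
          Real.sqrt (∫ x : ℝ, (φ.eval x) ^ 2 ∂(gaussianReal 0 1)) := by

  have h1 : ∫ x : ℝ, (derivative^[n] φ).eval x ∂(gaussianReal 0 1)
      = ∫ x : ℝ, φ.eval x * (H n).eval x ∂(gaussianReal 0 1) := by
    rw [integral_gauss_poly_eq n φ]
    congr 1
    funext x
    rw [Polynomial.eval_mul]
  have hf2 : Integrable (fun x => φ.eval x ^ 2) (gaussianReal 0 1) :=
    (integrable_poly_gauss (φ ^ 2)).congr
      (Filter.Eventually.of_forall fun x => by simp [Polynomial.eval_pow])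
  have hg2 : Integrable (fun x => (H n).eval x ^ 2) (gaussianReal 0 1) :=
    (integrable_poly_gauss (H n ^ 2)).congr
      (Filter.Eventually.of_forall fun x => by simp [Polynomial.eval_pow])
  have hfg : Integrable (fun x => φ.eval x * (H n).eval x) (gaussianReal 0 1) :=
    (integrable_poly_gauss (φ * H n)).congr
      (Filter.Eventually.of_forall fun x => by simp [Polynomial.eval_mul])
  have hcs := cs hf2 hg2 hfg
  rw [integral_H_sq] at hcs
  rw [h1]
  refine hcs.trans (le_of_eq ?_)
  ring
end
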